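/- Let R be a Noetherian Poisson algebra, N a finitely generated Poisson R-module, and P an associated prime of N. Then L = {n ∈ N : P^i · n = 0 for some i ≥ 0} is a nonzero Poisson submodule of N, i.e. {R, L}_N ⊆ L. -/

import Mathlib

/-- For an associated prime `P` of a finitely generated Poisson module `N`,
`L = {n : ∃ i, P^i • n = 0}` is a nonzero Poisson submodule of `N`. -/
theorem poisson_submodule_of_associated_prime
    (R : Type*) [CommRing R] [IsNoetherianRing R] [Algebra ℂ R]
    (N : Type*) [AddCommGroup N] [Module R N] [Module ℂ N] [Module.Finite R N]
    (b : R → R → R)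
    (hskew : ∀ x y : R, b x y = - b y x)
    (hleib : ∀ x y z : R, b (x * y) z = x * b y z + b x z * y)
    (hjac : ∀ x y z : R, b x (b y z) = b (b x y) z + b y (b x z))
    (bm : R → N → N)
    (hbmadd_l : ∀ (x y : R) (n : N), bm (x + y) n = bm x n + bm y n)
    (hbmadd_r : ∀ (x : R) (n n' : N), bm x (n + n') = bm x n + bm x n')
    (hbmleib : ∀ (r r' : R) (n : N), bm r (r' • n) = (b r r') • n + r' • bm r n)
    (P : Ideal R) (hP : IsAssociatedPrime P N)
    (L : Set N) (hL : L = {n : N | ∃ i : ℕ, ∀ r ∈ P ^ i, r • n = 0}) :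
    (∃ n ∈ L, n ≠ 0) ∧
    (∀ n ∈ L, ∀ n' ∈ L, n + n' ∈ L) ∧
    (∀ (r : R), ∀ n ∈ L, r • n ∈ L) ∧
    (∀ (r : R), ∀ n ∈ L, bm r n ∈ L) := by
  subst hL
  obtain ⟨hPprime, x, hx⟩ := isAssociatedPrime_iff.mp hP
  have hbm0 : ∀ r : R, bm r 0 = 0 := by
    intro r
    have h := hbmadd_r r 0 0
    rw [add_zero] at h
    exact (add_eq_left.mp h.symm)
  have hx0 : x ≠ 0 := by
    rintro rfl
    rw [Submodule.colon_singleton_zero] at hx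
    exact hPprime.ne_top hx
  refine ⟨⟨x, ⟨1, ?_⟩, hx0⟩, ?_, ?_, ?_⟩
  · intro r hr
    rw [pow_one, hx, Submodule.mem_colon_singleton, Submodule.mem_bot] at hr
    exact hr
  · rintro n ⟨i, hi⟩ n' ⟨j, hj⟩
    refine ⟨i + j, fun r hr => ?_⟩
    have h1 : r ∈ P ^ i := Ideal.pow_le_pow_right (Nat.le_add_right i j) hr
    have h2 : r ∈ P ^ j := Ideal.pow_le_pow_right (Nat.le_add_left j i) hr
    rw [smul_add, hi r h1, hj r h2, add_zero]
  · rintro r n ⟨i, hi⟩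
    refine ⟨i, fun s hs => ?_⟩
    rw [smul_comm, hi s hs, smul_zero]
  · rintro r n ⟨i, hi⟩
    refine ⟨i + i, fun s hs => ?_⟩
    have key : ∀ t ∈ P ^ i, t • bm r n = -((b r t) • n) := by
      intro t ht
      have h := hbmleib r t n
      rw [hi t ht, hbm0] at h
      exact eq_neg_of_add_eq_zero_right h.symm
    rw [pow_add] at hs
    refine Submodule.mul_induction_on hs (fun m hm p hp => ?_) (fun y z hy hz => ?_)
    · rw [mul_smul, key p hp, smul_neg, smul_smul, mul_comm, ← smul_smul,
        hi m hm, smul_zero, neg_zero]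
    · rw [add_smul, hy, hz, add_zero]
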